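/- arXiv:2510.14412 — 6 statements merged into one kernel-verified Lean document; each statement's English description precedes it below -/
import Mathlib

section
/- Let α be a type, F : Set α → Set α monotone, N : ℕ, and t : ℕ → Set α a sequence with t 0 = ∅, t k ⊆ t (k+1) and t (k+1) ⊆ t k ∪ F (t k) for all k < N, and F (t N) ⊆ t N. Then t N is the least fixed point of F, i.e. F (t N) = t N and t N ⊆ s for every s with F s ⊆ s. (Correctness and order-independence of the chaotic one-atom-at-a-time derivation performed by function extendStratum of Algorithm 1: no matter in which order applicable axiom instances are chosen, upon termination the computed set is the unique least fixed point.) -/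
theorem chaotic_iteration_computes_lfp
    {α : Type*} (F : Set α → Set α) (hF : Monotone F)
    (N : ℕ) (t : ℕ → Set α)
    (h0 : t 0 = ∅)
    (hincr : ∀ k < N, t k ⊆ t (k + 1))
    (hstep : ∀ k < N, t (k + 1) ⊆ t k ∪ F (t k))
    (hterm : F (t N) ⊆ t N) :
    F (t N) = t N ∧ ∀ s : Set α, F s ⊆ s → t N ⊆ s := by
  have hle : ∀ s : Set α, F s ⊆ s → ∀ k ≤ N, t k ⊆ s := by
    intro s hs k
    induction k with
    | zero => intro _; simp [h0]
    | succ k ih =>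
      intro hk
      have hk' : k < N := Nat.lt_of_succ_le hk
      intro x hx
      rcases hstep k hk' hx with h | h
      · exact ih hk'.le h
      · exact hs (hF (ih hk'.le) h)
  refine ⟨Set.Subset.antisymm hterm ?_, fun s hs => hle s hs N le_rfl⟩
  exact hle (F (t N)) (hF hterm) N le_rfl
end

section
/- (Semantic correctness of the axiom for ≺, equation (1).) For all a b : α: stage(a) < stage(b) if and only if there exists c : α with stage(a) ≤ stage(c), stage(c) ≤ f, and stage(c) + 1 = stage(b). That is, a is derived strictly before b exactly when a is derived before some atom c that is derived immediately before b. -/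
/- The stage of an atom `a` under the staged fixed-point computation
(Algorithm 2): the least `l` with `a ∈ F^[l] ∅` if `a` belongs to the
fixed point `F^[f] ∅`, and `f + 1` otherwise. -/
open Classical in
noncomputable def stage {α : Type*} (F : Set α → Set α) (f : ℕ) (a : α) : ℕ :=
  if a ∈ F^[f] (∅ : Set α) then sInf {l : ℕ | a ∈ F^[l] (∅ : Set α)} else f + 1

private lemma chain_mono' {α : Type*} {F : Set α → Set α} (hF : Monotone F) :
    Monotone (fun l => F^[l] (∅ : Set α)) := by
  apply monotone_nat_of_le_succ
  intro l
  induction l with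
  | zero => simp
  | succ n ih =>
    rw [Function.iterate_succ_apply', Function.iterate_succ_apply']
    exact hF ih

private lemma stage_pos {α : Type*} {F : Set α → Set α} (f : ℕ) (a : α) :
    1 ≤ stage F f a := by
  unfold stage
  split
  · rename_i h
    by_contra hc
    push_neg at hc
    interval_cases h' : sInf {l : ℕ | a ∈ F^[l] (∅ : Set α)}
    have hmem : a ∈ F^[sInf {l : ℕ | a ∈ F^[l] (∅ : Set α)}] (∅ : Set α) :=
      Nat.sInf_mem (⟨f, h⟩ : {l : ℕ | a ∈ F^[l] (∅ : Set α)}.Nonempty)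
    rw [h'] at hmem
    simp at hmem
  · omega

private lemma stage_eq_of_mem_diff {α : Type*} {F : Set α → Set α} (hF : Monotone F)
    {f l : ℕ} (hl : l + 1 ≤ f) {c : α}
    (h1 : c ∈ F^[l + 1] (∅ : Set α)) (h2 : c ∉ F^[l] (∅ : Set α)) :
    stage F f c = l + 1 := by
  have hcf : c ∈ F^[f] (∅ : Set α) := chain_mono' hF hl h1
  unfold stage
  rw [if_pos hcf]
  have hle : sInf {l' : ℕ | c ∈ F^[l'] (∅ : Set α)} ≤ l + 1 := Nat.sInf_le h1
  rcases Nat.lt_or_ge (sInf {l' : ℕ | c ∈ F^[l'] (∅ : Set α)}) (l + 1) with h | h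
  · exfalso
    have hmem : c ∈ F^[sInf {l' : ℕ | c ∈ F^[l'] (∅ : Set α)}] (∅ : Set α) :=
      Nat.sInf_mem (⟨l + 1, h1⟩ : {l' : ℕ | c ∈ F^[l'] (∅ : Set α)}.Nonempty)
    exact h2 (chain_mono' hF (Nat.lt_succ_iff.mp h) hmem)
  · omega

theorem lt_axiom_correct
    {α : Type*} [Fintype α] (F : Set α → Set α) (hF : Monotone F)
    (f : ℕ) (hf : F^[f + 1] ∅ = F^[f] ∅)
    (hfmin : ∀ j : ℕ, F^[j + 1] ∅ = F^[j] ∅ → f ≤ j) :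
    ∀ a b : α,
      stage F f a < stage F f b ↔
        ∃ c : α, stage F f a ≤ stage F f c ∧ stage F f c ≤ f ∧
          stage F f c + 1 = stage F f b := by
  intro a b
  constructor
  · intro h
    have ha1 : 1 ≤ stage F f a := stage_pos f a
    have hb2 : 2 ≤ stage F f b := by omega
    have hble : stage F f b ≤ f + 1 := by
      unfold stage
      split
      · rename_i hb
        exact le_trans (Nat.sInf_le hb) (by omega)
      · omega
    obtain ⟨k, hk⟩ : ∃ k, stage F f b = k + 2 := ⟨stage F f b - 2, by omega⟩
    have hkf : k + 1 ≤ f := by omega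
    -- the chain is strictly increasing below f
    have hne : F^[k + 1] (∅ : Set α) ≠ F^[k] (∅ : Set α) := by
      intro heq
      have := hfmin k heq
      omega
    have hsub : F^[k] (∅ : Set α) ⊆ F^[k + 1] (∅ : Set α) :=
      chain_mono' hF (Nat.le_succ k)
    obtain ⟨c, hc1, hc2⟩ : ∃ c, c ∈ F^[k + 1] (∅ : Set α) ∧ c ∉ F^[k] (∅ : Set α) := by
      by_contra hcon
      push_neg at hcon
      exact hne (Set.Subset.antisymm (fun x hx => hcon x hx) hsub)
    have hstc : stage F f c = k + 1 := stage_eq_of_mem_diff hF hkf hc1 hc2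
    exact ⟨c, by omega, by omega, by omega⟩
  · rintro ⟨c, h1, h2, h3⟩
    omega
end

section
/- (Semantic correctness of the axiom for ⪯, equation (2).) For all a b : α: a ∈ F {c : α | stage(c) < stage(b)} if and only if stage(a) ≤ stage(b) and stage(a) ≤ f. That is, a is derivable from the atoms derived strictly before b exactly when a is derived before b (and is derived at all). -/
theorem le_axiom_correct
    {α : Type*} [Fintype α] (F : Set α → Set α) (hF : Monotone F)
    (f : ℕ) (hf : F^[f + 1] ∅ = F^[f] ∅)
    (hfmin : ∀ j : ℕ, F^[j + 1] ∅ = F^[j] ∅ → f ≤ j) :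
    ∀ a b : α,
      a ∈ F {c : α | stage F f c < stage F f b} ↔
        stage F f a ≤ stage F f b ∧ stage F f a ≤ f := by
  have hmono : ∀ i j, i ≤ j → F^[i] (∅ : Set α) ⊆ F^[j] (∅ : Set α) := by
    have h1 : ∀ j, F^[j] (∅ : Set α) ⊆ F^[j + 1] (∅ : Set α) := by
      intro j
      induction j with
      | zero => simp
      | succ n ih =>
        rw [Function.iterate_succ_apply', Function.iterate_succ_apply']
        exact hF ih
    exact fun i j h => monotone_nat_of_le_succ h1 h
  have hfix : ∀ j, f ≤ j → F^[j] (∅ : Set α) = F^[f] (∅ : Set α) := by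
    intro j hj
    induction j, hj using Nat.le_induction with
    | base => rfl
    | succ n hn ih =>
      rw [Function.iterate_succ_apply', ih]
      have h := hf
      rwa [Function.iterate_succ_apply'] at h
  have mem_iff : ∀ (m : ℕ) (c : α),
      c ∈ F^[m] (∅ : Set α) ↔ stage F f c ≤ m ∧ stage F f c ≤ f := by
    intro m c
    constructor
    · intro hc
      have hcf : c ∈ F^[f] (∅ : Set α) := by
        rcases le_total m f with h | h
        · exact hmono m f h hc
        · rw [← hfix m h]; exact hc
      have hs : stage F f c = sInf {l : ℕ | c ∈ F^[l] (∅ : Set α)} := by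
        rw [stage, if_pos hcf]
      exact ⟨hs ▸ Nat.sInf_le hc, hs ▸ Nat.sInf_le hcf⟩
    · rintro ⟨h1, h2⟩
      have hcf : c ∈ F^[f] (∅ : Set α) := by
        by_contra hn
        rw [stage, if_neg hn] at h2
        omega
      have hmem : c ∈ F^[stage F f c] (∅ : Set α) := by
        rw [stage, if_pos hcf]
        exact Nat.sInf_mem (s := {l : ℕ | c ∈ F^[l] (∅ : Set α)}) ⟨f, hcf⟩
      exact hmono _ m h1 hmem
  have stage_pos : ∀ c : α, 1 ≤ stage F f c := by
    intro c
    by_contra h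
    have h0 : stage F f c = 0 := by omega
    have : c ∈ F^[0] (∅ : Set α) := (mem_iff 0 c).mpr ⟨by omega, by omega⟩
    simp at this
  have stage_le : ∀ c : α, stage F f c ≤ f + 1 := by
    intro c
    rw [stage]
    split
    · exact le_trans (Nat.sInf_le ‹_›) (by omega)
    · exact le_refl _
  intro a b
  have hset : {c : α | stage F f c < stage F f b} = F^[stage F f b - 1] (∅ : Set α) := by
    ext c
    simp only [Set.mem_setOf_eq, mem_iff]
    have hb1 := stage_pos b
    have hbf := stage_le b
    constructor
    · intro h
      exact ⟨by omega, by omega⟩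
    · rintro ⟨h1, h2⟩
      omega
  have heq : stage F f b - 1 + 1 = stage F f b := by
    have := stage_pos b
    omega
  have hFS : F (F^[stage F f b - 1] (∅ : Set α)) = F^[stage F f b] (∅ : Set α) := by
    conv_rhs => rw [← heq]
    rw [Function.iterate_succ_apply']
  rw [hset, hFS]
  exact mem_iff _ a
end

section
/- (Semantic correctness of the axiom for ⊀, equation (3).) For all a b : α: stage(a) ≥ stage(b) if and only if b ∈ F ∅, or there exists c : α with (stage(a) > stage(c) ∨ stage(a) = f + 1) and stage(c) + 1 = stage(b), or F ∅ = ∅. That is, a is not derived strictly before b exactly when b is derived in the first stage, or some c is derived immediately before b and a is not derived before c, or nothing can be derived at all. -/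
private lemma iterMono {α : Type*} (F : Set α → Set α) (hF : Monotone F) :
    Monotone fun j => F^[j] (∅ : Set α) := by
  apply monotone_nat_of_le_succ
  intro n
  induction n with
  | zero => simp
  | succ n ih =>
    rw [Function.iterate_succ_apply', Function.iterate_succ_apply']
    exact hF ih

theorem nlt_axiom_correct
    {α : Type*} [Fintype α] (F : Set α → Set α) (hF : Monotone F)
    (f : ℕ) (hf : F^[f + 1] ∅ = F^[f] ∅)
    (hfmin : ∀ j : ℕ, F^[j + 1] ∅ = F^[j] ∅ → f ≤ j) :
    ∀ a b : α,
      stage F f a ≥ stage F f b ↔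
        b ∈ F ∅ ∨
        (∃ c : α, (stage F f a > stage F f c ∨ stage F f a = f + 1) ∧
          stage F f c + 1 = stage F f b) ∨
        F ∅ = ∅ := by
  intro a b
  have hmono := iterMono F hF
  -- stage value for members
  have hstage_in : ∀ x : α, x ∈ F^[f] (∅ : Set α) →
      stage F f x = sInf {l : ℕ | x ∈ F^[l] (∅ : Set α)} := by
    intro x hx; simp only [stage, if_pos hx]
  have hstage_out : ∀ x : α, x ∉ F^[f] (∅ : Set α) → stage F f x = f + 1 := by
    intro x hx; simp only [stage, if_neg hx]
  have hmem : ∀ x : α, x ∈ F^[f] (∅ : Set α) → x ∈ F^[stage F f x] (∅ : Set α) := by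
    intro x hx
    rw [hstage_in x hx]
    exact Nat.sInf_mem ⟨f, show f ∈ {l : ℕ | x ∈ F^[l] (∅ : Set α)} from hx⟩
  have hnotmem : ∀ x : α, ∀ l, l < stage F f x → x ∉ F^[l] (∅ : Set α) := by
    intro x l hl hxl
    by_cases hx : x ∈ F^[f] (∅ : Set α)
    · rw [hstage_in x hx] at hl
      exact absurd hxl (Nat.notMem_of_lt_sInf hl)
    · rw [hstage_out x hx] at hl
      have hlf : l ≤ f := Nat.lt_succ_iff.mp hl
      exact hx (hmono hlf hxl)
  have hle : ∀ x : α, stage F f x ≤ f + 1 := by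
    intro x
    by_cases hx : x ∈ F^[f] (∅ : Set α)
    · rw [hstage_in x hx]
      exact le_trans (Nat.sInf_le hx) (Nat.le_succ f)
    · rw [hstage_out x hx]
  have hpos : ∀ x : α, 1 ≤ stage F f x := by
    intro x
    by_contra h
    have h0 : stage F f x = 0 := by omega
    have := hnotmem x  -- unused
    have hx0 : x ∈ F^[0] (∅ : Set α) := by
      by_cases hx : x ∈ F^[f] (∅ : Set α)
      · have := hmem x hx; rwa [h0] at this
      · rw [hstage_out x hx] at h0; omega
    simp at hx0
  constructor
  · intro hab
    by_cases hFe : F ∅ = ∅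
    · exact Or.inr (Or.inr hFe)
    by_cases hb : b ∈ F^[f] (∅ : Set α)
    · -- stage b = k + 1 for some k, with k + 1 ≤ f
      have hbb := hmem b hb
      obtain ⟨k, hk⟩ : ∃ k, stage F f b = k + 1 := by
        have := hpos b; exact ⟨stage F f b - 1, by omega⟩
      have hkf : k + 1 ≤ f := by
        rw [hstage_in b hb] at hk
        have := Nat.sInf_le (show f ∈ {l : ℕ | b ∈ F^[l] (∅ : Set α)} from hb)
        omega
      by_cases hk0 : k = 0
      · -- b ∈ F ∅
        subst hk0
        left
        have : b ∈ F^[0+1] (∅ : Set α) := by rw [← hk]; exact hbb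
        simpa using this
      · -- find c at stage k
        right; left
        have hbk : b ∉ F^[k] (∅ : Set α) := hnotmem b k (by omega)
        have hne : F^[k] (∅ : Set α) ≠ F^[k-1] (∅ : Set α) := by
          intro heq
          have : F^[k+1] (∅ : Set α) = F^[k] (∅ : Set α) := by
            have hk1 : k - 1 + 1 = k := by omega
            calc F^[k+1] (∅ : Set α) = F (F^[k] ∅) := Function.iterate_succ_apply' F k ∅
              _ = F (F^[k-1] ∅) := by rw [heq]
              _ = F^[k-1+1] (∅ : Set α) := (Function.iterate_succ_apply' F (k-1) ∅).symm
              _ = F^[k] (∅ : Set α) := by rw [hk1]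
          rw [hk, this] at hbb
          exact hbk hbb
        have hsub : F^[k-1] (∅ : Set α) ⊆ F^[k] (∅ : Set α) := hmono (by omega)
        obtain ⟨c, hck, hck1⟩ : ∃ c, c ∈ F^[k] (∅ : Set α) ∧ c ∉ F^[k-1] (∅ : Set α) := by
          by_contra h
          push_neg at h
          exact hne (Set.Subset.antisymm (fun x hx => h x hx) hsub)
        have hcf : c ∈ F^[f] (∅ : Set α) := hmono (by omega : k ≤ f) hck
        have hsc : stage F f c = k := by
          rw [hstage_in c hcf]
          apply le_antisymm
          · exact Nat.sInf_le (show k ∈ {l : ℕ | c ∈ F^[l] (∅ : Set α)} from hck)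
          · by_contra h
            push_neg at h
            have := Nat.sInf_mem (⟨f, hcf⟩ : Set.Nonempty {l : ℕ | c ∈ F^[l] (∅ : Set α)})
            have hsub2 : F^[sInf {l : ℕ | c ∈ F^[l] (∅ : Set α)}] (∅ : Set α) ⊆ F^[k-1] (∅ : Set α) :=
              hmono (by omega)
            exact hck1 (hsub2 this)
        exact ⟨c, Or.inl (by omega), by omega⟩
    · -- b ∉ S f : stage b = f + 1, stage a = f + 1
      have hsb := hstage_out b hb
      have hsa : stage F f a = f + 1 := le_antisymm (hle a) (hsb ▸ hab)
      rcases Nat.eq_zero_or_pos f with hf0 | hf0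
      · subst hf0
        simp only [zero_add, Function.iterate_one, Function.iterate_zero, id_eq] at hf
        exact Or.inr (Or.inr hf)
      · right; left
        -- find c at stage f
        have hne : F^[f] (∅ : Set α) ≠ F^[f-1] (∅ : Set α) := by
          intro heq
          have hf1 : f - 1 + 1 = f := by omega
          have : F^[f-1+1] (∅ : Set α) = F^[f-1] (∅ : Set α) := by
            rw [hf1, heq]
          have := hfmin (f-1) this
          omega
        have hsub : F^[f-1] (∅ : Set α) ⊆ F^[f] (∅ : Set α) := hmono (by omega)
        obtain ⟨c, hck, hck1⟩ : ∃ c, c ∈ F^[f] (∅ : Set α) ∧ c ∉ F^[f-1] (∅ : Set α) := by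
          by_contra h
          push_neg at h
          exact hne (Set.Subset.antisymm (fun x hx => h x hx) hsub)
        have hsc : stage F f c = f := by
          rw [hstage_in c hck]
          apply le_antisymm
          · exact Nat.sInf_le (show f ∈ {l : ℕ | c ∈ F^[l] (∅ : Set α)} from hck)
          · by_contra h
            push_neg at h
            have := Nat.sInf_mem (⟨f, hck⟩ : Set.Nonempty {l : ℕ | c ∈ F^[l] (∅ : Set α)})
            have hsub2 : F^[sInf {l : ℕ | c ∈ F^[l] (∅ : Set α)}] (∅ : Set α) ⊆ F^[f-1] (∅ : Set α) :=
              hmono (by omega)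
            exact hck1 (hsub2 this)
        exact ⟨c, Or.inr hsa, by omega⟩
  · rintro (hbF | ⟨c, hc1, hc2⟩ | hFe)
    · -- b ∈ F ∅ : stage b = 1 ≤ stage a
      rcases Nat.eq_zero_or_pos f with hf0 | hf0
      · subst hf0
        simp only [zero_add, Function.iterate_one, Function.iterate_zero, id_eq] at hf
        rw [hf] at hbF
        exact absurd hbF (Set.notMem_empty b)
      · have hb1 : b ∈ F^[1] (∅ : Set α) := by simpa using hbF
        have hbf : b ∈ F^[f] (∅ : Set α) := hmono hf0 hb1
        have : stage F f b ≤ 1 := by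
          rw [hstage_in b hbf]
          exact Nat.sInf_le (show 1 ∈ {l : ℕ | b ∈ F^[l] (∅ : Set α)} from hb1)
        exact le_trans this (hpos a)
    · rcases hc1 with h | h
      · omega
      · have := hle b; omega
    · -- everything empty
      have hall : ∀ j, F^[j] (∅ : Set α) = ∅ := by
        intro j
        induction j with
        | zero => simp
        | succ j ih => rw [Function.iterate_succ_apply', ih, hFe]
      have ha := hstage_out a (by rw [hall f]; exact Set.notMem_empty a)
      have hb := hstage_out b (by rw [hall f]; exact Set.notMem_empty b)
      omega
end

section
/- (Semantic correctness of the axiom for ⋠, equation (4).) For all a b : α: a ∉ F {c : α | stage(c) < stage(b)} if and only if stage(a) > stage(b) or stage(a) = f + 1. That is, a is not derivable from the atoms derived strictly before b exactly when a is not derived before b. -/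
theorem nle_axiom_correct
    {α : Type*} [Fintype α] (F : Set α → Set α) (hF : Monotone F)
    (f : ℕ) (hf : F^[f + 1] ∅ = F^[f] ∅)
    (hfmin : ∀ j : ℕ, F^[j + 1] ∅ = F^[j] ∅ → f ≤ j) :
    ∀ a b : α,
      a ∉ F {c : α | stage F f c < stage F f b} ↔
        stage F f a > stage F f b ∨ stage F f a = f + 1 := by
  have mono : Monotone (fun j => F^[j] (∅ : Set α)) := by
    apply monotone_nat_of_le_succ
    intro n
    induction n with
    | zero => simp
    | succ n ih =>
        rw [Function.iterate_succ_apply', Function.iterate_succ_apply']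
        exact hF ih
  have stable : ∀ j, f ≤ j → F^[j] (∅ : Set α) = F^[f] ∅ := by
    intro j hj
    obtain ⟨k, rfl⟩ := Nat.exists_eq_add_of_le hj
    induction k with
    | zero => rfl
    | succ k ih =>
        rw [show f + (k + 1) = (f + k) + 1 from rfl, Function.iterate_succ_apply', ih (by omega)]
        exact (Function.iterate_succ_apply' F f ∅).symm.trans hf
  have stage_le : ∀ a : α, stage F f a ≤ f + 1 := by
    intro a
    unfold stage
    split
    · exact le_trans (Nat.sInf_le (by assumption)) (by omega)
    · exact le_refl (f + 1)
  have mem_iff : ∀ (a : α) (l : ℕ),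
      a ∈ F^[l] (∅ : Set α) ↔ stage F f a ≤ l ∧ stage F f a ≤ f := by
    intro a l
    constructor
    · intro hl
      have haf : a ∈ F^[f] (∅ : Set α) := by
        rcases le_or_gt l f with h | h
        · exact mono h hl
        · rwa [stable l h.le] at hl
      have hst : stage F f a = sInf {l : ℕ | a ∈ F^[l] (∅ : Set α)} := if_pos haf
      constructor
      · rw [hst]; exact Nat.sInf_le hl
      · rw [hst]; exact Nat.sInf_le haf
    · rintro ⟨h1, h2⟩
      have haf : a ∈ F^[f] (∅ : Set α) := by
        by_contra h
        have : stage F f a = f + 1 := if_neg h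
        omega
      have hst : stage F f a = sInf {l : ℕ | a ∈ F^[l] (∅ : Set α)} := if_pos haf
      have hmem : a ∈ F^[stage F f a] (∅ : Set α) := by
        rw [hst]
        exact Nat.sInf_mem (⟨f, haf⟩ : {l : ℕ | a ∈ F^[l] (∅ : Set α)}.Nonempty)
      exact mono h1 hmem
  have stage_pos : ∀ a : α, 0 < stage F f a := by
    intro a
    by_contra h
    push_neg at h
    have h0 : stage F f a = 0 := by omega
    have : a ∈ F^[0] (∅ : Set α) := (mem_iff a 0).mpr ⟨by omega, by omega⟩
    simp at this
  intro a b
  have hm1 : 1 ≤ stage F f b := stage_pos b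
  have hmf : stage F f b ≤ f + 1 := stage_le b
  have hsa : stage F f a ≤ f + 1 := stage_le a
  have hset : {c : α | stage F f c < stage F f b} = F^[stage F f b - 1] (∅ : Set α) := by
    ext c
    rw [Set.mem_setOf_eq, mem_iff]
    have := stage_le c
    omega
  rw [hset,
    show F (F^[stage F f b - 1] (∅ : Set α)) = F^[stage F f b - 1 + 1] ∅ from
      (Function.iterate_succ_apply' F _ ∅).symm,
    show stage F f b - 1 + 1 = stage F f b by omega]
  rw [show (a ∉ F^[stage F f b] (∅ : Set α)) ↔ ¬(stage F f a ≤ stage F f b ∧ stage F f a ≤ f)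
    from not_congr (mem_iff a _)]
  omega
end

section
/- (Semantic correctness of the axiom for ◁, equation (5).) For all a b : α: stage(b) = stage(a) + 1 if and only if all three of the following hold: (i) a ∈ F {c : α | stage(c) < stage(a)}; (ii) b ∉ F {c : α | stage(c) < stage(a)}; and (iii) b ∈ F {c : α | stage(c) ≤ stage(a) ∧ stage(c) ≤ f}, or for every c : α, c ∈ F {c' : α | stage(c') ≤ stage(a) ∧ stage(c') ≤ f} implies c ∈ F {c' : α | stage(c') < stage(a)}. That is, a is derived immediately before b exactly when a is derivable from the atoms derived strictly before a, b is not derivable from those atoms, and either b is derivable from the atoms derived before a, or the fixed point is reached at a's stage. -/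
theorem imm_before_axiom_correct
    {α : Type*} [Fintype α] (F : Set α → Set α) (hF : Monotone F)
    (f : ℕ) (hf : F^[f + 1] ∅ = F^[f] ∅)
    (hfmin : ∀ j : ℕ, F^[j + 1] ∅ = F^[j] ∅ → f ≤ j) :
    ∀ a b : α,
      stage F f b = stage F f a + 1 ↔
        a ∈ F {c : α | stage F f c < stage F f a} ∧
        b ∉ F {c : α | stage F f c < stage F f a} ∧
        (b ∈ F {c : α | stage F f c ≤ stage F f a ∧ stage F f c ≤ f} ∨
          ∀ c : α,
            c ∈ F {c' : α | stage F f c' ≤ stage F f a ∧ stage F f c' ≤ f} →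
            c ∈ F {c' : α | stage F f c' < stage F f a}) := by
  have hstep : ∀ j : ℕ, F^[j + 1] (∅ : Set α) = F (F^[j] ∅) := fun j =>
    Function.iterate_succ_apply' F j ∅
  have hchain : ∀ j : ℕ, F^[j] (∅ : Set α) ⊆ F^[j + 1] ∅ := by
    intro j
    induction j with
    | zero => simp
    | succ k ih =>
      rw [hstep k, hstep (k + 1)]
      exact hF ih
  have hmono : ∀ {j k : ℕ}, j ≤ k → F^[j] (∅ : Set α) ⊆ F^[k] ∅ :=
    fun {j k} h => monotone_nat_of_le_succ hchain h
  have hstable : ∀ j : ℕ, f ≤ j → F^[j] (∅ : Set α) = F^[f] ∅ := by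
    intro j hj
    induction j, hj using Nat.le_induction with
    | base => rfl
    | succ k hk ih => rw [hstep k, ih, ← hstep f, hf]
  have hnot : ∀ a : α, a ∉ F^[f] (∅ : Set α) → stage F f a = f + 1 := by
    intro a ha; simp [stage, ha]
  have hmem : ∀ a : α, a ∈ F^[f] (∅ : Set α) → a ∈ F^[stage F f a] (∅ : Set α) := by
    intro a ha
    have h : stage F f a = sInf {l : ℕ | a ∈ F^[l] (∅ : Set α)} := by simp [stage, ha]
    rw [h]
    exact Nat.sInf_mem (⟨f, ha⟩ : {l : ℕ | a ∈ F^[l] (∅ : Set α)}.Nonempty)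
  have hsinf_le : ∀ a : α, a ∈ F^[f] (∅ : Set α) → stage F f a ≤ f := by
    intro a ha
    have h : stage F f a = sInf {l : ℕ | a ∈ F^[l] (∅ : Set α)} := by simp [stage, ha]
    rw [h]; exact Nat.sInf_le ha
  have hle_of_mem : ∀ (a : α) (m : ℕ), a ∈ F^[m] (∅ : Set α) → stage F f a ≤ m := by
    intro a m h
    rcases le_or_gt m f with hm | hm
    · have haf : a ∈ F^[f] (∅ : Set α) := hmono hm h
      have h' : stage F f a = sInf {l : ℕ | a ∈ F^[l] (∅ : Set α)} := by simp [stage, haf]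
      rw [h']; exact Nat.sInf_le h
    · have haf : a ∈ F^[f] (∅ : Set α) := by rw [← hstable m hm.le]; exact h
      exact (hsinf_le a haf).trans hm.le
  have hstage_le : ∀ a : α, stage F f a ≤ f + 1 := by
    intro a
    by_cases ha : a ∈ F^[f] (∅ : Set α)
    · exact (hsinf_le a ha).trans (Nat.le_succ f)
    · rw [hnot a ha]
  have hset_le : ∀ m : ℕ, m ≤ f → {c : α | stage F f c ≤ m} = F^[m] (∅ : Set α) := by
    intro m hm
    ext c
    simp only [Set.mem_setOf_eq]
    constructor
    · intro h
      by_cases hc : c ∈ F^[f] (∅ : Set α)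
      · exact hmono h (hmem c hc)
      · rw [hnot c hc] at h; omega
    · intro h; exact hle_of_mem c m h
  have hpos : ∀ a : α, 1 ≤ stage F f a := by
    intro a
    rcases Nat.eq_zero_or_pos (stage F f a) with h | h
    · exfalso
      by_cases ha : a ∈ F^[f] (∅ : Set α)
      · have hm := hmem a ha; rw [h] at hm; simp at hm
      · rw [hnot a ha] at h; omega
    · exact h
  intro a b
  by_cases ha : a ∈ F^[f] (∅ : Set α)
  · obtain ⟨m, hm⟩ : ∃ m, stage F f a = m + 1 :=
      ⟨stage F f a - 1, by have := hpos a; omega⟩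
    have hmf : m + 1 ≤ f := hm ▸ hsinf_le a ha
    have E1 : {c : α | stage F f c < stage F f a} = F^[m] (∅ : Set α) := by
      rw [← hset_le m (by omega)]
      ext c; simp [hm, Nat.lt_succ_iff]
    have E2 : {c : α | stage F f c ≤ stage F f a ∧ stage F f c ≤ f}
        = F^[m + 1] (∅ : Set α) := by
      rw [← hset_le (m + 1) hmf]
      ext c; simp only [Set.mem_setOf_eq, hm]
      exact ⟨fun h => h.1, fun h => ⟨h, h.trans hmf⟩⟩
    rw [E1, E2, ← hstep m, ← hstep (m + 1), hm]
    have hia : a ∈ F^[m + 1] (∅ : Set α) := by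
      have h := hmem a ha; rwa [hm] at h
    have hfix : (∀ c : α, c ∈ F^[m + 1 + 1] (∅ : Set α) → c ∈ F^[m + 1] ∅) ↔ f ≤ m + 1 := by
      constructor
      · intro h
        exact hfmin (m + 1) (Set.Subset.antisymm h (hchain (m + 1)))
      · intro h c hc
        rw [hstable (m + 1 + 1) (by omega), ← hstable (m + 1) h] at hc
        exact hc
    constructor
    · intro hb
      have hbn : b ∉ F^[m + 1] (∅ : Set α) := by
        intro hmem'
        have := hle_of_mem b (m + 1) hmem'
        omega
      refine ⟨hia, hbn, ?_⟩
      rcases le_or_gt f (m + 1) with hfn | hfn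
      · exact Or.inr (hfix.mpr hfn)
      · left
        by_cases hbf : b ∈ F^[f] (∅ : Set α)
        · have h := hmem b hbf; rwa [hb] at h
        · rw [hnot b hbf] at hb; omega
    · rintro ⟨-, hbn, hdisj⟩
      have hgt : m + 1 < stage F f b := by
        by_contra h
        push_neg at h
        have hb' : b ∈ F^[m + 1] (∅ : Set α) := by
          rw [← hset_le (m + 1) hmf]; exact h
        exact hbn hb'
      rcases hdisj with hb2 | hfix'
      · have := hle_of_mem b (m + 1 + 1) hb2
        omega
      · have hfn : f ≤ m + 1 := hfix.mp hfix'
        have hfe : f = m + 1 := le_antisymm hfn hmf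
        have hbf : b ∉ F^[f] (∅ : Set α) := by rw [hfe]; exact hbn
        rw [hnot b hbf, hfe]
  · have hn : stage F f a = f + 1 := hnot a ha
    constructor
    · intro h
      have := hstage_le b
      omega
    · rintro ⟨hi, -, -⟩
      exfalso
      have E : {c : α | stage F f c < stage F f a} = F^[f] (∅ : Set α) := by
        rw [← hset_le f le_rfl]
        ext c; simp [hn, Nat.lt_succ_iff]
      rw [E, ← hstep f, hf] at hi
      exact ha hi
end
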